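/- For all ψ∈F, all integers k≥1, and all b,c∈A, and for each fixed choice of sign ±: D^±(ψ, |ψ|·χ_b, k·χ_c) = Σ_{χ∈P_k(ψ)} ∏_{φ∈F} ( m(φ) (x^±⊗ c·b^{|φ|}·π(φ)) )^{(χ(φ))} in U(sl₂⊗A). -/

import Mathlib

open scoped TensorProduct
open Finsupp
open scoped Classical

noncomputable section

namespace MapAlgebra

/-- the divided power `u^{(r)} = u^r / r!` in a `ℂ`-algebra. -/
def dp {S : Type*} [Ring S] [Algebra ℂ S] (u : S) (r : ℕ) : S :=
  (r.factorial : ℂ)⁻¹ • u ^ r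

variable {A : Type*} [CommRing A] [Algebra ℂ A]

/-- `|ψ| = Σ_a ψ(a)` for a multiset `ψ` of elements of `A`. -/
def wt (ψ : A →₀ ℕ) : ℕ := ψ.sum fun _ n => n

/-- `π(ψ) = ∏_a a^{ψ(a)}`. -/
def piF (ψ : A →₀ ℕ) : A := ψ.prod fun a n => a ^ n

/-- `m(ψ) = |ψ|! / ∏_a ψ(a)!`. -/
def mF (ψ : A →₀ ℕ) : ℕ := Finsupp.multinomial ψ

variable {L : Type*} [LieRing L] [LieAlgebra ℂ L]

instance : LieAlgebra ℂ (A ⊗[ℂ] L) where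
  lie_smul c x y := by
    rw [← algebraMap_smul A c y, lie_smul, algebraMap_smul]

/-- The universal enveloping algebra `U(L ⊗ A)` of the map algebra `L ⊗ A`
(realized as `A ⊗[ℂ] L` with bracket `[a ⊗ z, b ⊗ z'] = ab ⊗ [z,z']`). -/
abbrev UEA (A : Type*) [CommRing A] [Algebra ℂ A]
    (L : Type*) [LieRing L] [LieAlgebra ℂ L] : Type _ :=
  UniversalEnvelopingAlgebra ℂ (A ⊗[ℂ] L)

/-- The element `v ⊗ a` of the map algebra, viewed inside `U(L ⊗ A)`. -/
def el (a : A) (v : L) : UEA A L :=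
  UniversalEnvelopingAlgebra.ι ℂ (a ⊗ₜ[ℂ] v)

lemma commute_el (a b : A) (v : L) : Commute (el a v : UEA A L) (el b v) := by
  letI := LieRing.ofAssociativeRing (A := UEA A L)
  have h := (UniversalEnvelopingAlgebra.ι ℂ).map_lie (a ⊗ₜ[ℂ] v) (b ⊗ₜ[ℂ] v)
  rw [LieAlgebra.ExtendScalars.bracket_tmul, lie_self, TensorProduct.tmul_zero, map_zero,
    Ring.lie_def] at h
  exact (sub_eq_zero.mp h.symm)

lemma commute_dp {S : Type*} [Ring S] [Algebra ℂ S] {u w : S} (h : Commute u w)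
    (r s : ℕ) : Commute (dp u r) (dp w s) :=
  ((h.pow_pow r s).smul_left _).smul_right _

/-- `x^±(ψ) = ∏_a (x^± ⊗ a)^{(ψ(a))}` (generic in the element `v` of `L`);
the factors pairwise commute, so the product is unambiguous. -/
def xProd (v : L) (ψ : A →₀ ℕ) : UEA A L :=
  ψ.support.noncommProd (fun a => dp (el a v) (ψ a))
    (fun a _ b _ _ => commute_dp (commute_el a b v) _ _)

/-- the predicate characterizing the recursively defined family
`p : F × F → U(L ⊗ A)` (relative to a choice `v` playing the role of `h`). -/
def IsP (v : L) (p : (A →₀ ℕ) → (A →₀ ℕ) → UEA A L) : Prop :=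
  p 0 0 = 1 ∧
  (∀ φ χ, wt φ ≠ wt χ → p φ χ = 0) ∧
  (∀ φ χ, φ ≠ 0 → χ ≠ 0 → wt φ = wt χ →
    p φ χ = -((wt φ : ℂ)⁻¹) •
      ∑ ψ₁ ∈ (Finset.Iic φ).erase 0, ∑ ψ₂ ∈ (Finset.Iic χ).erase 0,
        ((mF ψ₁ * mF ψ₂ : ℕ) : ℂ) • (el (piF ψ₁ * piF ψ₂) v * p (φ - ψ₁) (χ - ψ₂)))

/-- `p(χ) = p(χ, |χ|·χ₁)`. -/
def pOne (p : (A →₀ ℕ) → (A →₀ ℕ) → UEA A L) (χ : A →₀ ℕ) : UEA A L :=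
  p χ (Finsupp.single (1 : A) (wt χ))

/-- the predicate characterizing the recursively defined family
`D^± : F³ → U(L ⊗ A)` (relative to a choice `v` playing the role of `x^±`). -/
def IsD (v : L) (D : (A →₀ ℕ) → (A →₀ ℕ) → (A →₀ ℕ) → UEA A L) : Prop :=
  (D 0 0 0 = 1) ∧
  (∀ ψ₁ ψ₂ : A →₀ ℕ, ¬(ψ₁ = 0 ∧ ψ₂ = 0) → D ψ₁ ψ₂ 0 = 0) ∧
  (∀ (ψ₁ ψ₂ : A →₀ ℕ) (b : A), D ψ₁ ψ₂ (Finsupp.single b 1) =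
      if wt ψ₁ = wt ψ₂ then ((mF ψ₁ * mF ψ₂ : ℕ) : ℂ) • el (b * (piF ψ₁ * piF ψ₂)) v
      else 0) ∧
  (∀ ψ₁ ψ₂ ψ₃ : A →₀ ℕ, 2 ≤ wt ψ₃ →
    D ψ₁ ψ₂ ψ₃ = (wt ψ₃ : ℂ)⁻¹ •
      ∑ φ₁ ∈ Finset.Iic ψ₁, ∑ φ₂ ∈ Finset.Iic ψ₂, ∑ b ∈ ψ₃.support,
        D φ₁ φ₂ (Finsupp.single b 1) *
          D (ψ₁ - φ₁) (ψ₂ - φ₂) (ψ₃ - Finsupp.single b 1))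

/-- `𝔻(ψ₁,ψ₂,ψ₃) = Σ_{φ₁≤ψ₁} Σ_{φ₂≤ψ₂} p(φ₁,φ₂) D⁺(ψ₁−φ₁,ψ₂−φ₂,ψ₃)`. -/
def DD (p : (A →₀ ℕ) → (A →₀ ℕ) → UEA A L)
    (Dp : (A →₀ ℕ) → (A →₀ ℕ) → (A →₀ ℕ) → UEA A L)
    (ψ₁ ψ₂ ψ₃ : A →₀ ℕ) : UEA A L :=
  ∑ φ₁ ∈ Finset.Iic ψ₁, ∑ φ₂ ∈ Finset.Iic ψ₂,
    p φ₁ φ₂ * Dp (ψ₁ - φ₁) (ψ₂ - φ₂) ψ₃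

/-- the Lie algebra `sl₂` presented by a basis `x⁻ = b 0`, `h = b 1`, `x⁺ = b 2`
with `[h,x^±] = ±2x^±`, `[x⁺,x⁻] = h`. -/
structure Sl2Data (L : Type*) [LieRing L] [LieAlgebra ℂ L] where
  b : Module.Basis (Fin 3) ℂ L
  lie_h_xp : ⁅b 1, b 2⁆ = (2 : ℂ) • b 2
  lie_h_xm : ⁅b 1, b 0⁆ = (-2 : ℂ) • b 0
  lie_xp_xm : ⁅b 2, b 0⁆ = b 1

/-- `x⁻`. -/
def Sl2Data.xm (S : Sl2Data L) : L := S.b 0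
/-- `h`. -/
def Sl2Data.h (S : Sl2Data L) : L := S.b 1
/-- `x⁺`. -/
def Sl2Data.xp (S : Sl2Data L) : L := S.b 2

/-- The data of a root system and Chevalley basis for a (finite-dimensional simple)
complex Lie algebra `g`: a Cartan subalgebra `H`, the roots `R`, the positive roots
`Rpos` enumerated as `β 0, …, β (m-1)`, simple roots `α 0, …, α (n-1)`, root vectors
`x s γ` (`s = true` for `x_γ⁺`, `s = false` for `x_γ⁻`), coroots, integral Cartan
pairing, and structure constants `±(p+1)`. -/
structure ChevalleyData (g : Type*) [LieRing g] [LieAlgebra ℂ g] where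
  n : ℕ
  m : ℕ
  H : LieSubalgebra ℂ g
  cartan : H.IsCartanSubalgebra
  R : Set (Module.Dual ℂ H)
  Rpos : Set (Module.Dual ℂ H)
  β : Fin m → Module.Dual ℂ H
  β_inj : Function.Injective β
  Rpos_eq : Rpos = Set.range β
  α : Fin n → Module.Dual ℂ H
  α_mem : ∀ i, α i ∈ Rpos
  R_eq : R = Rpos ∪ (fun γ => -γ) '' Rpos
  x : Bool → Module.Dual ℂ H → g
  coroot : Module.Dual ℂ H → H
  chevBasis : Module.Basis ((Fin m × Bool) ⊕ Fin n) ℂ g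
  chevBasis_x : ∀ (k : Fin m) (s : Bool), chevBasis (Sum.inl (k, s)) = x s (β k)
  chevBasis_h : ∀ i : Fin n, chevBasis (Sum.inr i) = (coroot (α i) : g)
  rootvec_pos : ∀ γ ∈ Rpos, ∀ t : H, ⁅(t : g), x true γ⁆ = γ t • x true γ
  rootvec_neg : ∀ γ ∈ Rpos, ∀ t : H, ⁅(t : g), x false γ⁆ = -(γ t) • x false γ
  coroot_def : ∀ γ ∈ Rpos, ⁅x true γ, x false γ⁆ = (coroot γ : g)
  pairing : Module.Dual ℂ H → Module.Dual ℂ H → ℤ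
  pairing_eq : ∀ γ ∈ Rpos, ∀ δ ∈ R, δ (coroot γ) = (pairing γ δ : ℂ)
  pairing_self : ∀ γ ∈ Rpos, pairing γ γ = 2
  struct : ∀ γ δ, γ ∈ Rpos → δ ∈ Rpos → γ + δ ∈ R → ∃ (c : ℤ) (pm : ℕ),
    (δ - (pm : ℤ) • γ ∈ R) ∧ (∀ q : ℕ, δ - (q : ℤ) • γ ∈ R → q ≤ pm) ∧
    (c = pm + 1 ∨ c = -(pm + 1)) ∧
    ⁅x true γ, x true δ⁆ = (c : ℂ) • x true (γ + δ) ∧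
    ⁅x false γ, x false δ⁆ = (-c : ℂ) • x false (γ + δ)

/-- `ψ ∈ F(𝔹)`: the multiset `ψ` is supported on the basis `𝔹 = range bA` of `A`. -/
def SuppB {ιA : Type*} (bA : Module.Basis ιA ℂ A) (ψ : A →₀ ℕ) : Prop :=
  ∀ a ∈ ψ.support, a ∈ Set.range bA

variable {g : Type*} [LieRing g] [LieAlgebra ℂ g]

/-- The integral form `U_ℤ(g ⊗ A)`: the `ℤ`-subalgebra of `U(g ⊗ A)` generated by all
divided powers `(x_α^± ⊗ b)^{(r)}`, `α ∈ R⁺`, `b ∈ 𝔹`, `r ∈ ℕ`. -/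
def UZ (C : ChevalleyData g) {ιA : Type*} (bA : Module.Basis ιA ℂ A) : Subalgebra ℤ (UEA A g) :=
  Algebra.adjoin ℤ {u : UEA A g | ∃ (k : Fin C.m) (s : Bool) (i : ιA) (r : ℕ),
    u = dp (el (bA i) (C.x s (C.β k))) r}

/-- `U_ℤ^±(g ⊗ A)` (one sign `s` only). -/
def UZpm (C : ChevalleyData g) {ιA : Type*} (bA : Module.Basis ιA ℂ A) (s : Bool) :
    Subalgebra ℤ (UEA A g) :=
  Algebra.adjoin ℤ {u : UEA A g | ∃ (k : Fin C.m) (i : ιA) (r : ℕ),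
    u = dp (el (bA i) (C.x s (C.β k))) r}


/-- generalized binomial coefficient `C(z,k) = z(z-1)⋯(z-k+1)/k!` (as a complex scalar). -/
def cchoose (z : ℂ) (k : ℕ) : ℂ :=
  (k.factorial : ℂ)⁻¹ * ∏ j ∈ Finset.range k, (z - (j : ℂ))

/-- the (finite) set `P_k(ψ)` of partitions of `ψ` into `k` parts,
i.e. finitely supported `χ : F → ℕ` with `Σ_φ χ(φ)·φ = ψ` and `Σ_φ χ(φ) = k`. -/
def partitions (ψ : A →₀ ℕ) (k : ℕ) : Finset ((A →₀ ℕ) →₀ ℕ) :=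
  (Finset.Iic ((Finset.Iic ψ).sum fun φ => Finsupp.single φ k)).filter
    (fun χ => (χ.sum fun φ c => c • φ) = ψ ∧ (χ.sum fun _ c => c) = k)

/-- the (finite) set `S_k(χ)` of finitely supported `ψ : F → ℕ` with
`Σ_φ ψ(φ)·φ ≤ χ` and `Σ_φ ψ(φ) = k`. -/
def subPartitions (χ : A →₀ ℕ) (k : ℕ) : Finset ((A →₀ ℕ) →₀ ℕ) :=
  (Finset.Iic ((Finset.Iic χ).sum fun φ => Finsupp.single φ k)).filter
    (fun ψ => (ψ.sum fun φ c => c • φ) ≤ χ ∧ (ψ.sum fun _ c => c) = k)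

/-- `U_ℤ^0(g ⊗ A)`: the `ℤ`-subalgebra generated by the `p_i(χ)`, `χ ∈ F(𝔹)`,
where `P i` is the family `p_i` (defined by recursion relative to `h_{α_i}`). -/
def UZ0 (C : ChevalleyData g) {ιA : Type*} (bA : Module.Basis ιA ℂ A)
    (P : Fin C.n → (A →₀ ℕ) → (A →₀ ℕ) → UEA A g) : Subalgebra ℤ (UEA A g) :=
  Algebra.adjoin ℤ {u : UEA A g | ∃ (i : Fin C.n) (χ : A →₀ ℕ), SuppB bA χ ∧ u = pOne (P i) χ}

/-! ### Auxiliary lemmas for the partition formula -/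

section PartitionFormula

@[simp] lemma dp_zero' {S : Type*} [Ring S] [Algebra ℂ S] (u : S) : dp u 0 = 1 := by
  simp [dp]

@[simp] lemma dp_one' {S : Type*} [Ring S] [Algebra ℂ S] (u : S) : dp u 1 = u := by
  simp [dp]

lemma mul_dp_succ {S : Type*} [Ring S] [Algebra ℂ S] (u : S) (r : ℕ) :
    u * dp u r = ((r + 1 : ℕ) : ℂ) • dp u (r + 1) := by
  rw [dp, dp, mul_smul_comm, smul_smul, ← pow_succ']
  congr 1
  rw [Nat.factorial_succ, Nat.cast_mul]
  rw [mul_inv]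
  rw [← mul_assoc, mul_inv_cancel₀ (by exact_mod_cast Nat.succ_ne_zero r), one_mul]

@[simp] lemma wt_single (a : A) (n : ℕ) : wt (Finsupp.single a n) = n := by
  classical
  simp [wt, Finsupp.sum_single_index]

@[simp] lemma wt_zero : wt (0 : A →₀ ℕ) = 0 := by simp [wt]

lemma wt_add (φ χ : A →₀ ℕ) : wt (φ + χ) = wt φ + wt χ :=
  Finsupp.sum_add_index' (fun _ => rfl) (fun _ _ _ => rfl)

lemma wt_tsub_add {φ ψ : A →₀ ℕ} (h : φ ≤ ψ) : wt (ψ - φ) + wt φ = wt ψ := by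
  rw [← wt_add, tsub_add_cancel_of_le h]

lemma wt_mono {φ ψ : A →₀ ℕ} (h : φ ≤ ψ) : wt φ ≤ wt ψ := by
  have := wt_tsub_add h
  omega

lemma wt_tsub {φ ψ : A →₀ ℕ} (h : φ ≤ ψ) : wt (ψ - φ) = wt ψ - wt φ := by
  have := wt_tsub_add h
  omega

@[simp] lemma mF_single (a : A) (n : ℕ) : mF (Finsupp.single a n) = 1 := by
  classical
  rcases eq_or_ne n 0 with rfl | hn
  · simp [mF, Finsupp.multinomial_eq]
  · rw [mF, Finsupp.multinomial_eq, Finsupp.support_single_ne_zero _ hn]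
    simp

@[simp] lemma piF_single (a : A) (n : ℕ) : piF (Finsupp.single a n) = a ^ n :=
  Finsupp.prod_single_index (pow_zero a)

@[simp] lemma piF_zero : piF (0 : A →₀ ℕ) = 1 := by simp [piF]

lemma le_single_iff' {φ : A →₀ ℕ} {b : A} {n : ℕ} :
    φ ≤ Finsupp.single b n ↔ ∃ j ≤ n, φ = Finsupp.single b j := by
  constructor
  · intro h
    refine ⟨φ b, by simpa using h b, ?_⟩
    ext a
    rcases eq_or_ne a b with rfl | ha
    · simp
    · have h2 := h a
      rw [Finsupp.single_apply, if_neg (fun hh => ha (hh.symm))] at h2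
      rw [Finsupp.single_apply, if_neg (fun hh => ha (hh.symm))]
      omega
  · rintro ⟨j, hj, rfl⟩
    intro a
    rw [Finsupp.single_apply, Finsupp.single_apply]
    split <;> omega

lemma Iic_single (b : A) (n : ℕ) :
    Finset.Iic (Finsupp.single b n) =
      (Finset.range (n + 1)).image (fun j => Finsupp.single b j) := by
  ext φ
  simp only [Finset.mem_Iic, Finset.mem_image, Finset.mem_range, Nat.lt_succ_iff]
  rw [le_single_iff']
  constructor
  · rintro ⟨j, hj, rfl⟩; exact ⟨j, hj, rfl⟩
  · rintro ⟨j, hj, rfl⟩; exact ⟨j, hj, rfl⟩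

section pM

variable (v : L) (b c : A)

/-- the factor of a partition monomial -/
def pf (φ : A →₀ ℕ) : UEA A L := ((mF φ : ℕ) : ℂ) • el (c * b ^ wt φ * piF φ) v

lemma pf_comm (φ φ' : A →₀ ℕ) : Commute (pf v b c φ) (pf v b c φ') :=
  ((commute_el _ _ _).smul_left _).smul_right _

/-- the partition monomial -/
def pM (χ : (A →₀ ℕ) →₀ ℕ) : UEA A L :=
  χ.support.noncommProd (fun φ => dp (pf v b c φ) (χ φ))
    (fun φ _ φ' _ _ => commute_dp (pf_comm v b c φ φ') _ _)

lemma pM_eq_noncommProd {χ : (A →₀ ℕ) →₀ ℕ} {s : Finset (A →₀ ℕ)} (hs : χ.support ⊆ s) :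
    pM v b c χ = s.noncommProd (fun φ => dp (pf v b c φ) (χ φ))
      (fun φ _ φ' _ _ => commute_dp (pf_comm v b c φ φ') _ _) := by
  classical
  have h1 : (s \ χ.support).noncommProd (fun φ => dp (pf v b c φ) (χ φ))
      (fun φ _ φ' _ _ => commute_dp (pf_comm v b c φ φ') _ _) = 1 := by
    refine (Finset.noncommProd_eq_pow_card _ _ _ 1 ?_).trans (one_pow _)
    intro φ hφ
    rw [Finset.mem_sdiff] at hφ
    rw [Finsupp.notMem_support_iff.mp hφ.2, dp_zero']
  have h2 := Finset.noncommProd_union_of_disjoint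
    (Finset.disjoint_sdiff (s := χ.support) (t := s))
    (fun φ => dp (pf v b c φ) (χ φ))
    (fun φ _ φ' _ _ => commute_dp (pf_comm v b c φ φ') _ _)
  have h3 := Finset.noncommProd_congr (Finset.union_sdiff_of_subset hs)
    (fun (x : A →₀ ℕ) _ => rfl)
    (f := fun φ => dp (pf v b c φ) (χ φ)) (g := fun φ => dp (pf v b c φ) (χ φ))
    (fun φ _ φ' _ _ => commute_dp (pf_comm v b c φ φ') _ _)
  rw [pM, ← h3, h2, h1, mul_one]

lemma pf_mul_pM {χ : (A →₀ ℕ) →₀ ℕ} {φ : A →₀ ℕ} (hφ : χ φ ≠ 0) :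
    pf v b c φ * pM v b c (χ - Finsupp.single φ 1) = ((χ φ : ℕ) : ℂ) • pM v b c χ := by
  classical
  have hmem : φ ∈ χ.support := Finsupp.mem_support_iff.mpr hφ
  have hsub : (χ - Finsupp.single φ 1).support ⊆ χ.support := by
    intro x hx
    rw [Finsupp.mem_support_iff] at hx ⊢
    rw [Finsupp.tsub_apply] at hx
    omega
  set R := (χ.support.erase φ).noncommProd (fun φ' => dp (pf v b c φ') (χ φ'))
    (fun φ' _ φ'' _ _ => commute_dp (pf_comm v b c φ' φ'') _ _) with hR
  have hB : pM v b c χ = dp (pf v b c φ) (χ φ) * R :=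
    (Finset.mul_noncommProd_erase χ.support hmem _ _).symm
  have hA : pM v b c (χ - Finsupp.single φ 1) = dp (pf v b c φ) (χ φ - 1) * R := by
    refine (pM_eq_noncommProd v b c hsub).trans ?_
    refine ((Finset.mul_noncommProd_erase χ.support hmem _ _).symm).trans ?_
    have happ : ((χ - Finsupp.single φ 1 : (A →₀ ℕ) →₀ ℕ)) φ = χ φ - 1 := by
      rw [Finsupp.tsub_apply, Finsupp.single_eq_same]
    rw [happ, hR]
    congr 1
    refine Finset.noncommProd_congr rfl (fun x hx => ?_) _
    have hne : x ≠ φ := Finset.ne_of_mem_erase hx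
    rw [Finsupp.tsub_apply, Finsupp.single_apply, if_neg (fun hh => hne hh.symm), Nat.sub_zero]
  rw [hA, hB, ← mul_assoc, mul_dp_succ,
    Nat.sub_add_cancel (Nat.one_le_iff_ne_zero.mpr hφ), smul_mul_assoc]

end pM

lemma mem_partitions {ψ : A →₀ ℕ} {k : ℕ} {χ : (A →₀ ℕ) →₀ ℕ} :
    χ ∈ partitions ψ k ↔ (χ.sum fun φ c => c • φ) = ψ ∧ (χ.sum fun _ c => c) = k := by
  classical
  rw [partitions, Finset.mem_filter]
  refine ⟨fun h => h.2, fun h => ⟨Finset.mem_Iic.mpr ?_, h⟩⟩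
  intro φ₀
  rcases eq_or_ne (χ φ₀) 0 with h0 | h0
  · simp [h0]
  have hφ₀ : φ₀ ∈ χ.support := Finsupp.mem_support_iff.mpr h0
  have h1 : χ φ₀ ≤ k := by
    rw [← h.2, Finsupp.sum]
    exact Finset.single_le_sum (f := fun φ => χ φ) (fun _ _ => Nat.zero_le _) hφ₀
  have h2 : φ₀ ≤ ψ := by
    rw [← h.1, Finsupp.sum]
    calc φ₀ ≤ χ φ₀ • φ₀ := by
          obtain ⟨m, hm⟩ := Nat.exists_eq_succ_of_ne_zero h0
          rw [hm, succ_nsmul]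
          exact le_add_self
      _ ≤ _ := Finset.single_le_sum (f := fun φ => χ φ • φ) (fun _ _ => zero_le) hφ₀
  have hB : ((Finset.Iic ψ).sum fun φ => Finsupp.single φ k) φ₀ = k := by
    rw [Finset.sum_apply']
    simp only [Finsupp.single_apply]
    rw [Finset.sum_ite_eq' (Finset.Iic ψ) φ₀ (fun _ => k), if_pos (Finset.mem_Iic.mpr h2)]
  rw [hB]
  exact h1

lemma le_of_mem_partitions {ψ : A →₀ ℕ} {k : ℕ} {χ : (A →₀ ℕ) →₀ ℕ}
    (hχ : χ ∈ partitions ψ k) {φ : A →₀ ℕ} (hφ : φ ∈ χ.support) : φ ≤ ψ := by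
  obtain ⟨h1, _⟩ := mem_partitions.mp hχ
  have h0 : χ φ ≠ 0 := Finsupp.mem_support_iff.mp hφ
  rw [← h1, Finsupp.sum]
  calc φ ≤ χ φ • φ := by
        obtain ⟨m, hm⟩ := Nat.exists_eq_succ_of_ne_zero h0
        rw [hm, succ_nsmul]
        exact le_add_self
    _ ≤ _ := Finset.single_le_sum (f := fun φ' => χ φ' • φ') (fun _ _ => zero_le) hφ

lemma partitions_one (ψ : A →₀ ℕ) : partitions ψ 1 = {Finsupp.single ψ 1} := by
  classical
  ext χ
  rw [mem_partitions, Finset.mem_singleton]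
  constructor
  · rintro ⟨hsum, hcount⟩
    have hne : χ.support.Nonempty := by
      rcases χ.support.eq_empty_or_nonempty with h | h
      · rw [Finsupp.support_eq_empty] at h
        subst h
        simp at hcount
      · exact h
    have hcard : χ.support.card = 1 := by
      have hle : χ.support.card ≤ χ.sum fun _ c => c := by
        rw [Finsupp.sum, Finset.card_eq_sum_ones]
        exact Finset.sum_le_sum fun φ hφ =>
          Nat.one_le_iff_ne_zero.mpr (Finsupp.mem_support_iff.mp hφ)
      rw [hcount] at hle
      exact le_antisymm hle (Finset.Nonempty.card_pos hne)
    obtain ⟨φ₀, hφ₀⟩ := Finset.card_eq_one.mp hcard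
    obtain ⟨_, hχeq⟩ := Finsupp.support_eq_singleton.mp hφ₀
    have hval : χ φ₀ = 1 := by
      rw [hχeq] at hcount
      rwa [Finsupp.sum_single_index rfl] at hcount
    rw [hχeq, hval] at hsum ⊢
    rw [Finsupp.sum_single_index (zero_smul ℕ φ₀), one_smul] at hsum
    rw [hsum]
  · rintro rfl
    constructor
    · rw [Finsupp.sum_single_index (zero_smul ℕ ψ), one_smul]
    · rw [Finsupp.sum_single_index rfl]

lemma partition_rec (v : L) (b c : A) (ψ : A →₀ ℕ) (k : ℕ) :
    ∑ φ ∈ Finset.Iic ψ, ∑ χ ∈ partitions (ψ - φ) k, pf v b c φ * pM v b c χ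
      = ∑ χ ∈ partitions ψ (k + 1), ((k + 1 : ℕ) : ℂ) • pM v b c χ := by
  classical
  have hRHS : ∀ χ ∈ partitions ψ (k + 1),
      ((k + 1 : ℕ) : ℂ) • pM v b c χ = ∑ φ ∈ χ.support, ((χ φ : ℕ) : ℂ) • pM v b c χ := by
    intro χ hχ
    rw [← Finset.sum_smul, ← Nat.cast_sum]
    have : ∑ φ ∈ χ.support, χ φ = k + 1 := (mem_partitions.mp hχ).2
    rw [this]
  rw [Finset.sum_congr rfl hRHS, Finset.sum_sigma', Finset.sum_sigma']
  refine Finset.sum_nbij' (i := fun x => ⟨x.2 + Finsupp.single x.1 1, x.1⟩)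
    (j := fun y => ⟨y.2, y.1 - Finsupp.single y.2 1⟩) ?_ ?_ ?_ ?_ ?_
  · rintro ⟨φ, χ⟩ hx
    dsimp only
    rw [Finset.mem_sigma] at hx ⊢
    obtain ⟨hφ, hχ⟩ := hx
    rw [Finset.mem_Iic] at hφ
    obtain ⟨hsum, hcount⟩ := mem_partitions.mp hχ
    constructor
    · rw [mem_partitions]
      constructor
      · rw [Finsupp.sum_add_index' (fun φ' => zero_smul ℕ φ') (fun φ' c1 c2 => add_smul c1 c2 φ')]
        rw [hsum, Finsupp.sum_single_index (zero_smul ℕ φ), one_smul]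
        exact tsub_add_cancel_of_le hφ
      · rw [Finsupp.sum_add_index' (fun _ => rfl) (fun _ _ _ => rfl), hcount,
          Finsupp.sum_single_index rfl]
    · rw [Finsupp.mem_support_iff, Finsupp.add_apply, Finsupp.single_eq_same]
      omega
  · rintro ⟨χ, φ⟩ hy
    dsimp only
    rw [Finset.mem_sigma] at hy ⊢
    obtain ⟨hχ, hφ⟩ := hy
    have hle : φ ≤ ψ := le_of_mem_partitions hχ hφ
    have h0 : χ φ ≠ 0 := Finsupp.mem_support_iff.mp hφ
    have hsle : Finsupp.single φ 1 ≤ χ :=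
      Finsupp.single_le_iff.mpr (Nat.one_le_iff_ne_zero.mpr h0)
    obtain ⟨hsum, hcount⟩ := mem_partitions.mp hχ
    have hdecomp : (χ - Finsupp.single φ 1) + Finsupp.single φ 1 = χ :=
      tsub_add_cancel_of_le hsle
    constructor
    · exact Finset.mem_Iic.mpr hle
    · rw [mem_partitions]
      constructor
      · have := hsum
        rw [← hdecomp,
          Finsupp.sum_add_index' (fun φ' => zero_smul ℕ φ') (fun φ' c1 c2 => add_smul c1 c2 φ'),
          Finsupp.sum_single_index (zero_smul ℕ φ), one_smul] at this
        exact eq_tsub_of_add_eq this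
      · have := hcount
        rw [← hdecomp, Finsupp.sum_add_index' (fun _ => rfl) (fun _ _ _ => rfl),
          Finsupp.sum_single_index rfl] at this
        have h5 : ((χ - Finsupp.single φ 1).sum fun _ c => c) = k := by omega
        exact h5
  · rintro ⟨φ, χ⟩ _
    simp [add_tsub_cancel_right]
  · rintro ⟨χ, φ⟩ hy
    rw [Finset.mem_sigma] at hy
    have h0 : χ φ ≠ 0 := Finsupp.mem_support_iff.mp hy.2
    have hsle : Finsupp.single φ 1 ≤ χ :=
      Finsupp.single_le_iff.mpr (Nat.one_le_iff_ne_zero.mpr h0)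
    simp [tsub_add_cancel_of_le hsle]
  · rintro ⟨φ, χ⟩ hx
    dsimp only
    have h0 : ((χ + Finsupp.single φ 1 : (A →₀ ℕ) →₀ ℕ)) φ ≠ 0 := by
      rw [Finsupp.add_apply, Finsupp.single_eq_same]
      omega
    have := pf_mul_pM v b c h0
    rw [add_tsub_cancel_right] at this
    exact this

end PartitionFormula


/-- explicit formula for `D^±(ψ, |ψ|·χ_b, k·χ_c)` as a sum over
partitions of `ψ` into `k` parts. -/
theorem D_partition_formula (S : Sl2Data L) (sgn : Bool)
    (D : (A →₀ ℕ) → (A →₀ ℕ) → (A →₀ ℕ) → UEA A L)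
    (hD : IsD (if sgn then S.xp else S.xm) D)
    (ψ : A →₀ ℕ) (k : ℕ) (hk : 1 ≤ k) (b c : A) :
    D ψ (Finsupp.single b (wt ψ)) (Finsupp.single c k) =
      ∑ χ ∈ partitions ψ k,
        χ.support.noncommProd
          (fun φ => dp (((mF φ : ℕ) : ℂ) •
              el (c * b ^ wt φ * piF φ) (if sgn then S.xp else S.xm)) (χ φ))
          (fun φ _ φ' _ _ =>
            commute_dp (((commute_el _ _ _).smul_left _).smul_right _) _ _) := by
  set v := (if sgn then S.xp else S.xm) with hv
  obtain ⟨hD0, hDz, hD1, hDr⟩ := hD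
  suffices h : D ψ (Finsupp.single b (wt ψ)) (Finsupp.single c k) =
      ∑ χ ∈ partitions ψ k, pM v b c χ by
    rw [h]
    rfl
  obtain ⟨n, rfl⟩ : ∃ n, k = n + 1 := ⟨k - 1, by omega⟩
  clear hk
  induction n generalizing ψ with
  | zero =>
    simp only [Nat.zero_add]
    rw [hD1 ψ (Finsupp.single b (wt ψ)) c, partitions_one, Finset.sum_singleton]
    rw [if_pos (by rw [wt_single])]
    rw [pM_eq_noncommProd v b c Finsupp.support_single_subset, Finset.noncommProd_singleton,
      Finsupp.single_eq_same, dp_one', pf]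
    rw [mF_single, piF_single, Nat.mul_one]
    have harg : c * (piF ψ * b ^ wt ψ) = c * b ^ wt ψ * piF ψ := by ring
    rw [harg]
  | succ n ih =>
    rw [hDr ψ (Finsupp.single b (wt ψ)) (Finsupp.single c (n + 1 + 1))
      (by rw [wt_single]; omega)]
    rw [wt_single, Finsupp.support_single_ne_zero c (Nat.succ_ne_zero (n + 1))]
    have hsub3 : Finsupp.single c (n + 1 + 1) - Finsupp.single c 1
        = Finsupp.single c (n + 1) := by
      rw [← Finsupp.single_tsub]
      norm_num
    simp only [Finset.sum_singleton, hsub3]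
    have hinner : ∀ φ ∈ Finset.Iic ψ,
        (∑ φ₂ ∈ Finset.Iic (Finsupp.single b (wt ψ)),
            D φ φ₂ (Finsupp.single c 1) *
              D (ψ - φ) (Finsupp.single b (wt ψ) - φ₂) (Finsupp.single c (n + 1)))
          = ∑ χ ∈ partitions (ψ - φ) (n + 1), pf v b c φ * pM v b c χ := by
      intro φ hφ
      have hφle : φ ≤ ψ := Finset.mem_Iic.mp hφ
      rw [Iic_single, Finset.sum_image (fun x _ y _ h => by
        simpa using DFunLike.congr_fun h b)]
      simp only [hD1, wt_single, mF_single, piF_single, Nat.mul_one, ite_mul, zero_mul]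
      rw [Finset.sum_ite_eq (Finset.range (wt ψ + 1)) (wt φ)]
      rw [if_pos (Finset.mem_range.mpr (Nat.lt_succ_of_le (wt_mono hφle)))]
      have hbsub : Finsupp.single b (wt ψ) - Finsupp.single b (wt φ)
          = Finsupp.single b (wt (ψ - φ)) := by
        rw [← Finsupp.single_tsub, wt_tsub hφle]
      rw [hbsub, ih (ψ - φ)]
      have hpf : ((mF φ : ℕ) : ℂ) • el (c * (piF φ * b ^ wt φ)) v = pf v b c φ := by
        rw [pf]
        have : c * (piF φ * b ^ wt φ) = c * b ^ wt φ * piF φ := by ring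
        rw [this]
      rw [hpf, Finset.mul_sum]
    rw [Finset.sum_congr rfl hinner, partition_rec v b c ψ (n + 1), ← Finset.smul_sum,
      smul_smul, inv_mul_cancel₀ (by exact_mod_cast Nat.succ_ne_zero (n + 1) :
        ((n + 1 + 1 : ℕ) : ℂ) ≠ 0), one_smul]


end MapAlgebra
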